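/- arXiv:1707.05684 — 2 statements merged into one kernel-verified Lean document; each statement's English description precedes it below -/
import Mathlib

section
/- Let A : ℝ³ → ℝ³ and Φ : ℝ³ → ℝ be given in cylindrical coordinates by A¹ = xF₁(ρ) − yF₂(ρ), A² = yF₁(ρ) + xF₂(ρ), A³ = F₃(ρ), Φ = G(ρ), where ρ = √(x²+y²) and F₁,F₂,F₃,G are C¹ functions on (0,∞). Then along any solution of ẍⁱ = Σⱼ ẋʲ(∂ⱼAⁱ − ∂ᵢAʲ) − ∂ᵢΦ that avoids the z-axis, the quantities I₁ = ż + F₃(ρ) and I₂ = xẏ − yẋ + (x²+y²)F₂(ρ) are both constant in time. -/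
/-- Partial derivative `∂ⱼ f (p)`, via the one-variable derivative along the `j`-th axis. -/
noncomputable def pd (j : Fin 3) (f : (Fin 3 → ℝ) → ℝ) (p : Fin 3 → ℝ) : ℝ :=
  deriv (fun s => f (Function.update p j s)) (p j)

/-- `ρ = √(x² + y²)`. -/
noncomputable def rho (p : Fin 3 → ℝ) : ℝ := Real.sqrt (p 0 ^ 2 + p 1 ^ 2)

lemma upd_rho0 (p : Fin 3 → ℝ) (s : ℝ) :
    rho (Function.update p 0 s) = Real.sqrt (s ^ 2 + p 1 ^ 2) := by
  simp [rho, Function.update_apply]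

lemma upd_rho1 (p : Fin 3 → ℝ) (s : ℝ) :
    rho (Function.update p 1 s) = Real.sqrt (s ^ 2 + p 0 ^ 2) := by
  simp [rho, Function.update_apply, add_comm]

lemma upd_rho2 (p : Fin 3 → ℝ) (s : ℝ) :
    rho (Function.update p 2 s) = rho p := by
  simp [rho, Function.update_apply]

lemma hasDerivAt_comp_sqrt (F : ℝ → ℝ) (u c : ℝ) (h : 0 < u ^ 2 + c)
    (hF : DifferentiableAt ℝ F (Real.sqrt (u ^ 2 + c))) :
    HasDerivAt (fun s => F (Real.sqrt (s ^ 2 + c)))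
      (deriv F (Real.sqrt (u ^ 2 + c)) * (u / Real.sqrt (u ^ 2 + c))) u := by
  have h1 : HasDerivAt (fun s : ℝ => s ^ 2 + c) (2 * u) u := by
    simpa using (hasDerivAt_pow 2 u).add_const c
  have h3 : HasDerivAt (fun s => Real.sqrt (s ^ 2 + c))
      (u / Real.sqrt (u ^ 2 + c)) u := by
    have h2 := (Real.hasDerivAt_sqrt (ne_of_gt h)).comp u h1
    refine h2.congr_deriv (Eq.symm ?_)
    have : Real.sqrt (u ^ 2 + c) ≠ 0 := by positivity
    field_simp
  exact hF.hasDerivAt.comp u h3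


/-- For axially symmetric potentials `A¹ = xF₁(ρ) − yF₂(ρ)`, `A² = yF₁(ρ) + xF₂(ρ)`,
`A³ = F₃(ρ)`, `Φ = G(ρ)`, the quantities `I₁ = ż + F₃(ρ)` and
`I₂ = xẏ − yẋ + (x²+y²)F₂(ρ)` are conserved along solutions of
`ẍⁱ = Σⱼ ẋʲ(∂ᵢAʲ − ∂ⱼAⁱ) − ∂ᵢΦ` avoiding the z-axis. -/
theorem stmt_10
    (F₁ F₂ F₃ G : ℝ → ℝ)
    (hF₁ : ∀ s, 0 < s → DifferentiableAt ℝ F₁ s)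
    (hF₂ : ∀ s, 0 < s → DifferentiableAt ℝ F₂ s)
    (hF₃ : ∀ s, 0 < s → DifferentiableAt ℝ F₃ s)
    (hG : ∀ s, 0 < s → DifferentiableAt ℝ G s)
    (A : Fin 3 → (Fin 3 → ℝ) → ℝ) (Φ : (Fin 3 → ℝ) → ℝ)
    (hA0 : ∀ p, A 0 p = p 0 * F₁ (rho p) - p 1 * F₂ (rho p))
    (hA1 : ∀ p, A 1 p = p 1 * F₁ (rho p) + p 0 * F₂ (rho p))
    (hA2 : ∀ p, A 2 p = F₃ (rho p))
    (hΦ : ∀ p, Φ p = G (rho p))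
    (x v a : ℝ → Fin 3 → ℝ)
    (hx : ∀ t, HasDerivAt x (v t) t)
    (hv : ∀ t, HasDerivAt v (a t) t)
    (haxis : ∀ t, 0 < (x t 0) ^ 2 + (x t 1) ^ 2)
    (ode : ∀ t i, a t i =
        (∑ j, v t j * (pd i (A j) (x t) - pd j (A i) (x t))) - pd i Φ (x t)) :
    ∀ t,
      HasDerivAt (fun s => v s 2 + F₃ (rho (x s))) 0 t ∧
      HasDerivAt (fun s => x s 0 * v s 1 - x s 1 * v s 0
          + ((x s 0) ^ 2 + (x s 1) ^ 2) * F₂ (rho (x s))) 0 t := by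
  intro t
  have hxc : ∀ i, HasDerivAt (fun s => x s i) (v t i) t := fun i => by
    exact
      ((ContinuousLinearMap.proj i : (Fin 3 → ℝ) →L[ℝ] ℝ).hasFDerivAt.comp_hasDerivAt t (hx t))
  have hvc : ∀ i, HasDerivAt (fun s => v s i) (a t i) t := fun i => by
    exact
      ((ContinuousLinearMap.proj i : (Fin 3 → ℝ) →L[ℝ] ℝ).hasFDerivAt.comp_hasDerivAt t (hv t))
  set r : ℝ := rho (x t) with hrdef
  have hpos := haxis t
  have hr : 0 < r := Real.sqrt_pos.mpr hpos
  have hrne : r ≠ 0 := ne_of_gt hr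
  have hr2 : r ^ 2 = x t 0 ^ 2 + x t 1 ^ 2 := Real.sq_sqrt (le_of_lt hpos)
  have hsq0 : Real.sqrt (x t 0 ^ 2 + x t 1 ^ 2) = r := rfl
  have hsq1 : Real.sqrt (x t 1 ^ 2 + x t 0 ^ 2) = r := by rw [add_comm]; rfl
  have hpos1 : 0 < x t 1 ^ 2 + x t 0 ^ 2 := by linarith
  -- differentiability hypotheses at r
  have dF₁ := hF₁ r hr
  have dF₂ := hF₂ r hr
  have dF₃ := hF₃ r hr
  have dG := hG r hr
  -- pd computations
  have pd02 : pd 0 (A 2) (x t) = deriv F₃ r * (x t 0 / r) := by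
    unfold pd
    rw [show (fun s => A 2 (Function.update (x t) 0 s)) =
        fun s => F₃ (Real.sqrt (s ^ 2 + x t 1 ^ 2)) from
      funext fun s => by rw [hA2, upd_rho0]]
    have := (hasDerivAt_comp_sqrt F₃ (x t 0) (x t 1 ^ 2) hpos (by rwa [hsq0])).deriv
    rw [this, hsq0]
  have pd12 : pd 1 (A 2) (x t) = deriv F₃ r * (x t 1 / r) := by
    unfold pd
    rw [show (fun s => A 2 (Function.update (x t) 1 s)) =
        fun s => F₃ (Real.sqrt (s ^ 2 + x t 0 ^ 2)) from
      funext fun s => by rw [hA2, upd_rho1]]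
    have := (hasDerivAt_comp_sqrt F₃ (x t 1) (x t 0 ^ 2) hpos1 (by rwa [hsq1])).deriv
    rw [this, hsq1]
  have pd0Φ : pd 0 Φ (x t) = deriv G r * (x t 0 / r) := by
    unfold pd
    rw [show (fun s => Φ (Function.update (x t) 0 s)) =
        fun s => G (Real.sqrt (s ^ 2 + x t 1 ^ 2)) from
      funext fun s => by rw [hΦ, upd_rho0]]
    have := (hasDerivAt_comp_sqrt G (x t 0) (x t 1 ^ 2) hpos (by rwa [hsq0])).deriv
    rw [this, hsq0]
  have pd1Φ : pd 1 Φ (x t) = deriv G r * (x t 1 / r) := by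
    unfold pd
    rw [show (fun s => Φ (Function.update (x t) 1 s)) =
        fun s => G (Real.sqrt (s ^ 2 + x t 0 ^ 2)) from
      funext fun s => by rw [hΦ, upd_rho1]]
    have := (hasDerivAt_comp_sqrt G (x t 1) (x t 0 ^ 2) hpos1 (by rwa [hsq1])).deriv
    rw [this, hsq1]
  have pd20 : pd 2 (A 0) (x t) = 0 := by
    unfold pd
    rw [show (fun s => A 0 (Function.update (x t) 2 s)) =
        fun _ => x t 0 * F₁ r - x t 1 * F₂ r from
      funext fun s => by rw [hA0, upd_rho2]; simp [Function.update_apply]; rfl]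
    exact deriv_const _ _
  have pd21 : pd 2 (A 1) (x t) = 0 := by
    unfold pd
    rw [show (fun s => A 1 (Function.update (x t) 2 s)) =
        fun _ => x t 1 * F₁ r + x t 0 * F₂ r from
      funext fun s => by rw [hA1, upd_rho2]; simp [Function.update_apply]; rfl]
    exact deriv_const _ _
  have pd2Φ : pd 2 Φ (x t) = 0 := by
    unfold pd
    rw [show (fun s => Φ (Function.update (x t) 2 s)) = fun _ => G r from
      funext fun s => by rw [hΦ, upd_rho2]]
    exact deriv_const _ _
  have pd01 : pd 0 (A 1) (x t) =
      x t 1 * (deriv F₁ r * (x t 0 / r)) +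
      (F₂ r + x t 0 * (deriv F₂ r * (x t 0 / r))) := by
    unfold pd
    rw [show (fun s => A 1 (Function.update (x t) 0 s)) =
        fun s => x t 1 * F₁ (Real.sqrt (s ^ 2 + x t 1 ^ 2))
          + s * F₂ (Real.sqrt (s ^ 2 + x t 1 ^ 2)) from
      funext fun s => by rw [hA1, upd_rho0]; simp [Function.update_apply]]
    have h1 := (hasDerivAt_comp_sqrt F₁ (x t 0) (x t 1 ^ 2) hpos (by rwa [hsq0])).const_mul (x t 1)
    have h2 := (hasDerivAt_id' (x := x t 0)).mul
      (hasDerivAt_comp_sqrt F₂ (x t 0) (x t 1 ^ 2) hpos (by rwa [hsq0]))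
    have h3 := h1.add h2
    erw [h3.deriv]; rw [hsq0]; ring
  have pd10 : pd 1 (A 0) (x t) =
      x t 0 * (deriv F₁ r * (x t 1 / r)) -
      (F₂ r + x t 1 * (deriv F₂ r * (x t 1 / r))) := by
    unfold pd
    rw [show (fun s => A 0 (Function.update (x t) 1 s)) =
        fun s => x t 0 * F₁ (Real.sqrt (s ^ 2 + x t 0 ^ 2))
          - s * F₂ (Real.sqrt (s ^ 2 + x t 0 ^ 2)) from
      funext fun s => by rw [hA0, upd_rho1]; simp [Function.update_apply]]
    have h1 := (hasDerivAt_comp_sqrt F₁ (x t 1) (x t 0 ^ 2) hpos1 (by rwa [hsq1])).const_mul (x t 0)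
    have h2 := (hasDerivAt_id' (x := x t 1)).mul
      (hasDerivAt_comp_sqrt F₂ (x t 1) (x t 0 ^ 2) hpos1 (by rwa [hsq1]))
    have h3 := h1.sub h2
    erw [h3.deriv]; rw [hsq1]; ring
  -- derivative of rho along the trajectory
  have hsum : HasDerivAt (fun s => (x s 0) ^ 2 + (x s 1) ^ 2)
      (2 * x t 0 * v t 0 + 2 * x t 1 * v t 1) t := by
    have := ((hxc 0).pow 2).add ((hxc 1).pow 2)
    refine this.congr_deriv (Eq.symm ?_); simp
  have hrt : HasDerivAt (fun s => rho (x s))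
      ((x t 0 * v t 0 + x t 1 * v t 1) / r) t := by
    have h2 := (Real.hasDerivAt_sqrt (ne_of_gt hpos)).comp t hsum
    have : (fun s => rho (x s)) = fun s => Real.sqrt ((x s 0) ^ 2 + (x s 1) ^ 2) := rfl
    rw [this]
    refine h2.congr_deriv (Eq.symm ?_)
    rw [hsq0]
    field_simp
  have hF₃rt : HasDerivAt (fun s => F₃ (rho (x s)))
      (deriv F₃ r * ((x t 0 * v t 0 + x t 1 * v t 1) / r)) t := by
    exact dF₃.hasDerivAt.comp t hrt
  have hF₂rt : HasDerivAt (fun s => F₂ (rho (x s)))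
      (deriv F₂ r * ((x t 0 * v t 0 + x t 1 * v t 1) / r)) t := by
    exact dF₂.hasDerivAt.comp t hrt
  constructor
  · have h := (hvc 2).add hF₃rt
    refine h.congr_deriv (Eq.symm ?_)
    rw [ode t 2, Fin.sum_univ_three, pd20, pd21, pd02, pd12, pd2Φ]
    field_simp
    ring
  · have h := (((hxc 0).mul (hvc 1)).sub ((hxc 1).mul (hvc 0))).add (hsum.mul hF₂rt)
    refine h.congr_deriv (Eq.symm ?_)
    rw [ode t 0, ode t 1, Fin.sum_univ_three, Fin.sum_univ_three,
      pd01, pd10, pd02, pd12, pd20, pd21, pd0Φ, pd1Φ,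
      show x t 0 ^ 2 + x t 1 ^ 2 = r ^ 2 from hr2.symm]
    field_simp
    linear_combination (-(v t 0 * x t 0) - v t 1 * x t 1) * deriv F₂ r * hr2
end

section
/- Let A : ℝ³ → ℝ³ and Φ : ℝ³ → ℝ be functions of x alone: A¹ = 0, A² = F₂(x), A³ = F₃(x), Φ = G(x), with F₂, F₃, G of class C¹. Then along any solution of ẍⁱ = Σⱼ ẋʲ(∂ⱼAⁱ − ∂ᵢAʲ) − ∂ᵢΦ, the quantities I₁ = ẏ + F₂(x) and I₂ = ż + F₃(x) are constant in time, and moreover H = ½(ẋ² + ẏ² + ż²) + G(x) is constant. -/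
lemma pd_comp0 (f f' : ℝ → ℝ) (hf : ∀ s, HasDerivAt f (f' s) s) (p : Fin 3 → ℝ) :
    pd 0 (fun q => f (q 0)) p = f' (p 0) := by
  unfold pd
  have : (fun s => f (Function.update p 0 s 0)) = f := by
    funext s; rw [Function.update_self]
  rw [this]; exact (hf (p 0)).deriv

lemma pd_other (f : ℝ → ℝ) (j : Fin 3) (hj : j ≠ 0) (p : Fin 3 → ℝ) :
    pd j (fun q => f (q 0)) p = 0 := by
  unfold pd
  have : (fun s => f (Function.update p j s 0)) = fun _ => f (p 0) := by
    funext s; rw [Function.update_of_ne (Ne.symm hj)]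
  rw [this]; exact deriv_const _ _

lemma pd_zero (j : Fin 3) (p : Fin 3 → ℝ) : pd j (fun _ => (0:ℝ)) p = 0 := by
  unfold pd; exact deriv_const _ _

/-- For potentials depending on `x` only, `A = (0, F₂(x), F₃(x))`, `Φ = G(x)`,
the quantities `I₁ = ẏ + F₂(x)`, `I₂ = ż + F₃(x)` and the energy
`H = ½(ẋ² + ẏ² + ż²) + G(x)` are conserved along solutions of
`ẍⁱ = Σⱼ ẋʲ(∂ᵢAʲ − ∂ⱼAⁱ) − ∂ᵢΦ`. -/
theorem stmt_11
    (F₂ F₃ G F₂' F₃' G' : ℝ → ℝ)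
    (hF₂ : ∀ s, HasDerivAt F₂ (F₂' s) s)
    (hF₃ : ∀ s, HasDerivAt F₃ (F₃' s) s)
    (hG : ∀ s, HasDerivAt G (G' s) s)
    (A : Fin 3 → (Fin 3 → ℝ) → ℝ) (Φ : (Fin 3 → ℝ) → ℝ)
    (hA0 : ∀ p, A 0 p = 0)
    (hA1 : ∀ p, A 1 p = F₂ (p 0))
    (hA2 : ∀ p, A 2 p = F₃ (p 0))
    (hΦ : ∀ p, Φ p = G (p 0))
    (x v a : ℝ → Fin 3 → ℝ)
    (hx : ∀ t, HasDerivAt x (v t) t)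
    (hv : ∀ t, HasDerivAt v (a t) t)
    (ode : ∀ t i, a t i =
        (∑ j, v t j * (pd i (A j) (x t) - pd j (A i) (x t))) - pd i Φ (x t)) :
    ∀ t,
      HasDerivAt (fun s => v s 1 + F₂ (x s 0)) 0 t ∧
      HasDerivAt (fun s => v s 2 + F₃ (x s 0)) 0 t ∧
      HasDerivAt (fun s => (1/2) * ((v s 0)^2 + (v s 1)^2 + (v s 2)^2) + G (x s 0)) 0 t := by
  have hA0' : A 0 = fun _ => (0:ℝ) := funext hA0
  have hA1' : A 1 = fun q => F₂ (q 0) := funext hA1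
  have hA2' : A 2 = fun q => F₃ (q 0) := funext hA2
  have hΦ' : Φ = fun q => G (q 0) := funext hΦ
  intro t
  have hxc : ∀ i, HasDerivAt (fun s => x s i) (v t i) t :=
    hasDerivAt_pi.mp (hx t)
  have hvc : ∀ i, HasDerivAt (fun s => v s i) (a t i) t :=
    hasDerivAt_pi.mp (hv t)
  -- compute the accelerations
  have h10 : (1 : Fin 3) ≠ 0 := by decide
  have h20 : (2 : Fin 3) ≠ 0 := by decide
  have ha0 : a t 0 = v t 1 * F₂' (x t 0) + v t 2 * F₃' (x t 0) - G' (x t 0) := by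
    rw [ode t 0]
    rw [hΦ']
    simp only [Fin.sum_univ_three, hA0', hA1', hA2',
      pd_comp0 F₂ F₂' hF₂, pd_comp0 F₃ F₃' hF₃, pd_comp0 G G' hG,
      pd_other F₂ 1 h10, pd_other F₂ 2 h20, pd_other F₃ 1 h10, pd_other F₃ 2 h20,
      pd_other G 1 h10, pd_other G 2 h20, pd_zero]
    ring
  have ha1 : a t 1 = -(v t 0 * F₂' (x t 0)) := by
    rw [ode t 1]
    rw [hΦ']
    simp only [Fin.sum_univ_three, hA0', hA1', hA2',
      pd_comp0 F₂ F₂' hF₂, pd_comp0 F₃ F₃' hF₃, pd_comp0 G G' hG,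
      pd_other F₂ 1 h10, pd_other F₂ 2 h20, pd_other F₃ 1 h10, pd_other F₃ 2 h20,
      pd_other G 1 h10, pd_other G 2 h20, pd_zero]
    ring
  have ha2 : a t 2 = -(v t 0 * F₃' (x t 0)) := by
    rw [ode t 2]
    rw [hΦ']
    simp only [Fin.sum_univ_three, hA0', hA1', hA2',
      pd_comp0 F₂ F₂' hF₂, pd_comp0 F₃ F₃' hF₃, pd_comp0 G G' hG,
      pd_other F₂ 1 h10, pd_other F₂ 2 h20, pd_other F₃ 1 h10, pd_other F₃ 2 h20,
      pd_other G 1 h10, pd_other G 2 h20, pd_zero]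
    ring
  have hF₂x : HasDerivAt (fun s => F₂ (x s 0)) (F₂' (x t 0) * v t 0) t :=
    (hF₂ (x t 0)).comp t (hxc 0)
  have hF₃x : HasDerivAt (fun s => F₃ (x s 0)) (F₃' (x t 0) * v t 0) t :=
    (hF₃ (x t 0)).comp t (hxc 0)
  have hGx : HasDerivAt (fun s => G (x s 0)) (G' (x t 0) * v t 0) t :=
    (hG (x t 0)).comp t (hxc 0)
  refine ⟨?_, ?_, ?_⟩
  · have := (hvc 1).fun_add hF₂x
    rw [ha1] at this
    exact this.congr_deriv (by ring)
  · have := (hvc 2).fun_add hF₃x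
    rw [ha2] at this
    exact this.congr_deriv (by ring)
  · have hsq : ∀ i, HasDerivAt (fun s => (v s i)^2) (2 * v t i * a t i) t := by
      intro i
      simpa using ((hvc i).fun_pow 2)
    have : HasDerivAt
        (fun s => (1/2) * ((v s 0)^2 + (v s 1)^2 + (v s 2)^2) + G (x s 0))
        ((1/2) * (2 * v t 0 * a t 0 + 2 * v t 1 * a t 1 + 2 * v t 2 * a t 2)
          + G' (x t 0) * v t 0) t :=
      ((((hsq 0).add (hsq 1)).add (hsq 2)).const_mul (1/2)).add hGx
    convert this using 1
    rw [ha0, ha1, ha2]; ring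
end
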